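/- Let N, M ≥ 1, let D : ℝ^N → ℝ^M be linear, let h : ℝ^N → ℝ and f : ℝ^N → (−∞,+∞] be measurable with 0 < ∫_{ℝ^N} exp(−h(x)−f(x)) dx < ∞, and let g : ℝ^M → ℝ be continuous with exp(−g) bounded. Let π be the probability measure on ℝ^N with density proportional to x ↦ exp(−h(x)−f(x)−g(Dx)), and for η > 0 let π_η be the probability measure on ℝ^N with density proportional to x ↦ exp(−h(x)−f(x)) · (2πη²)^{−M/2} ∫_{ℝ^M} exp(−g(z)) exp(−‖Dx − z‖²/(2η²)) dz. Then ‖π − π_η‖_TV → 0 as η → 0⁺. -/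

import Mathlib

open MeasureTheory Filter Topology

noncomputable section Stmt6Aux

open Real

lemma s6_gaussInt (M : ℕ) :
    Integrable (fun u : EuclideanSpace ℝ (Fin M) => rexp (-‖u‖ ^ 2 / 2)) := by
  have h := (GaussianFourier.integrable_cexp_neg_mul_sq_norm_add
      (V := EuclideanSpace ℝ (Fin M)) (b := (1/2 : ℂ)) (by norm_num) 0 0).norm
  refine h.congr (Filter.Eventually.of_forall fun u => ?_)
  simp only [Complex.norm_exp]
  norm_num [← Complex.ofReal_pow]
  ring

lemma s6_gaussVal (M : ℕ) :
    ∫ u : EuclideanSpace ℝ (Fin M), rexp (-‖u‖ ^ 2 / 2) = (2 * π) ^ ((M : ℝ) / 2) := by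
  have h := GaussianFourier.integral_rexp_neg_mul_sq_norm
    (V := EuclideanSpace ℝ (Fin M)) (b := 1/2) (by norm_num)
  rw [finrank_euclideanSpace_fin] at h
  have : ∀ u : EuclideanSpace ℝ (Fin M), -‖u‖ ^ 2 / 2 = -(1/2) * ‖u‖ ^ 2 := by
    intro u; ring
  simp_rw [this, h]
  congr 1
  field_simp


variable {M : ℕ} {g : EuclideanSpace ℝ (Fin M) → ℝ} {C : ℝ}

lemma s6_intgrand (hg : Continuous g) (hC : ∀ z, rexp (-g z) ≤ C) (η : ℝ)
    (y : EuclideanSpace ℝ (Fin M)) :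
    Integrable (fun u : EuclideanSpace ℝ (Fin M) =>
      rexp (-g (y + η • u)) * rexp (-‖u‖ ^ 2 / 2)) := by
  refine ((s6_gaussInt M).const_mul C).mono' ?_ (Filter.Eventually.of_forall fun u => ?_)
  · exact (((hg.comp (continuous_const.add (continuous_const_smul η))).neg.rexp).mul
      ((continuous_norm.pow 2).neg.div_const 2).rexp).aestronglyMeasurable
  · rw [Real.norm_eq_abs, abs_of_nonneg (by positivity)]
    exact mul_le_mul_of_nonneg_right (hC _) (Real.exp_nonneg _)

lemma s6_J_nonneg (η : ℝ) (y : EuclideanSpace ℝ (Fin M)) :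
    0 ≤ ∫ u : EuclideanSpace ℝ (Fin M), rexp (-g (y + η • u)) * rexp (-‖u‖ ^ 2 / 2) :=
  integral_nonneg fun u => by positivity

lemma s6_J_le (hg : Continuous g) (hC : ∀ z, rexp (-g z) ≤ C) (η : ℝ)
    (y : EuclideanSpace ℝ (Fin M)) :
    (∫ u : EuclideanSpace ℝ (Fin M), rexp (-g (y + η • u)) * rexp (-‖u‖ ^ 2 / 2))
      ≤ C * (2 * π) ^ ((M : ℝ) / 2) := by
  rw [← s6_gaussVal M, ← integral_const_mul]
  exact integral_mono (s6_intgrand hg hC η y) ((s6_gaussInt M).const_mul C)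
    fun u => mul_le_mul_of_nonneg_right (hC _) (Real.exp_nonneg _)

lemma s6_J_cont (hg : Continuous g) (hC : ∀ z, rexp (-g z) ≤ C) (η : ℝ) :
    Continuous fun y : EuclideanSpace ℝ (Fin M) =>
      ∫ u : EuclideanSpace ℝ (Fin M), rexp (-g (y + η • u)) * rexp (-‖u‖ ^ 2 / 2) := by
  apply continuous_of_dominated (bound := fun u : EuclideanSpace ℝ (Fin M) => C * rexp (-‖u‖ ^ 2 / 2))
  · exact fun y => (s6_intgrand hg hC η y).aestronglyMeasurable
  · intro y
    refine Filter.Eventually.of_forall fun u => ?_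
    rw [Real.norm_eq_abs, abs_of_nonneg (by positivity)]
    exact mul_le_mul_of_nonneg_right (hC _) (Real.exp_nonneg _)
  · exact (s6_gaussInt M).const_mul C
  · refine Filter.Eventually.of_forall fun u => ?_
    exact ((hg.comp (continuous_id.add continuous_const)).neg.rexp).mul continuous_const

lemma s6_coef {η : ℝ} (hη : 0 < η) :
    (2 * π * η ^ 2 : ℝ) ^ (-(M : ℝ) / 2) = (2 * π) ^ (-(M : ℝ) / 2) * (η ^ M)⁻¹ := by
  rw [Real.mul_rpow (by positivity) (by positivity)]
  congr 1
  rw [← Real.rpow_natCast η 2, ← Real.rpow_natCast η M, ← Real.rpow_mul hη.le,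
    ← Real.rpow_neg hη.le]
  congr 1
  push_cast
  ring

lemma s6_key (hg : Continuous g) (hC : ∀ z, rexp (-g z) ≤ C) {η : ℝ} (hη : 0 < η)
    (y : EuclideanSpace ℝ (Fin M)) :
    (2 * π * η ^ 2 : ℝ) ^ (-(M : ℝ) / 2) *
        ∫ z, rexp (-g z) * rexp (-‖y - z‖ ^ 2 / (2 * η ^ 2))
      = (2 * π) ^ (-(M : ℝ) / 2) *
        ∫ u : EuclideanSpace ℝ (Fin M), rexp (-g (y + η • u)) * rexp (-‖u‖ ^ 2 / 2) := by
  have t1 : (∫ z, rexp (-g z) * rexp (-‖y - z‖ ^ 2 / (2 * η ^ 2)))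
      = ∫ z : EuclideanSpace ℝ (Fin M), rexp (-g (y + z)) * rexp (-‖z‖ ^ 2 / (2 * η ^ 2)) := by
    rw [← integral_add_left_eq_self
      (fun z : EuclideanSpace ℝ (Fin M) => rexp (-g z) * rexp (-‖y - z‖ ^ 2 / (2 * η ^ 2))) y]
    congr 1
    funext z
    rw [sub_add_cancel_left, norm_neg]
  have he : ∀ u : EuclideanSpace ℝ (Fin M),
      -‖η • u‖ ^ 2 / (2 * η ^ 2) = -‖u‖ ^ 2 / 2 := by
    intro u
    rw [norm_smul, Real.norm_eq_abs, mul_pow, sq_abs]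
    field_simp
  have t2 := Measure.integral_comp_smul_of_nonneg (μ := volume)
    (f := fun z : EuclideanSpace ℝ (Fin M) => rexp (-g (y + z)) * rexp (-‖z‖ ^ 2 / (2 * η ^ 2)))
    η (hR := hη.le)
  rw [finrank_euclideanSpace_fin] at t2
  simp_rw [he] at t2
  rw [smul_eq_mul] at t2
  have hA : (∫ z : EuclideanSpace ℝ (Fin M), rexp (-g (y + z)) * rexp (-‖z‖ ^ 2 / (2 * η ^ 2)))
      = η ^ M * ∫ u : EuclideanSpace ℝ (Fin M), rexp (-g (y + η • u)) * rexp (-‖u‖ ^ 2 / 2) := by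
    rw [t2, ← mul_assoc, mul_inv_cancel₀ (pow_ne_zero _ hη.ne'), one_mul]
  rw [t1, hA, s6_coef hη, mul_assoc, inv_mul_cancel_left₀ (pow_ne_zero _ hη.ne')]

lemma s6_tendsto (hg : Continuous g) (hC : ∀ z, rexp (-g z) ≤ C)
    (y : EuclideanSpace ℝ (Fin M)) :
    Tendsto (fun η : ℝ => (2 * π) ^ (-(M : ℝ) / 2) *
        ∫ u : EuclideanSpace ℝ (Fin M), rexp (-g (y + η • u)) * rexp (-‖u‖ ^ 2 / 2))
      (nhdsWithin 0 (Set.Ioi 0)) (nhds (rexp (-g y))) := by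
  have h1 : Tendsto (fun η : ℝ => ∫ u : EuclideanSpace ℝ (Fin M),
        rexp (-g (y + η • u)) * rexp (-‖u‖ ^ 2 / 2))
      (nhdsWithin 0 (Set.Ioi 0))
      (nhds (∫ u : EuclideanSpace ℝ (Fin M), rexp (-g y) * rexp (-‖u‖ ^ 2 / 2))) := by
    apply tendsto_integral_filter_of_dominated_convergence
      (bound := fun u : EuclideanSpace ℝ (Fin M) => C * rexp (-‖u‖ ^ 2 / 2))
    · exact Filter.Eventually.of_forall fun η => (s6_intgrand hg hC η y).aestronglyMeasurable
    · refine Filter.Eventually.of_forall fun η => Filter.Eventually.of_forall fun u => ?_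
      rw [Real.norm_eq_abs, abs_of_nonneg (by positivity)]
      exact mul_le_mul_of_nonneg_right (hC _) (Real.exp_nonneg _)
    · exact (s6_gaussInt M).const_mul C
    · refine Filter.Eventually.of_forall fun u => ?_
      have hyu : Tendsto (fun η : ℝ => y + η • u) (nhdsWithin 0 (Set.Ioi 0)) (nhds y) := by
        have h2 : Tendsto (fun η : ℝ => y + η • u) (nhds 0) (nhds (y + (0 : ℝ) • u)) :=
          (continuous_const.add (continuous_id.smul continuous_const)).tendsto 0
        simpa using h2.mono_left nhdsWithin_le_nhds
      exact (((Real.continuous_exp.tendsto _).comp ((hg.tendsto y).comp hyu).neg).mul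
        tendsto_const_nhds)
  rw [show (∫ u : EuclideanSpace ℝ (Fin M), rexp (-g y) * rexp (-‖u‖ ^ 2 / 2))
      = rexp (-g y) * (2 * π) ^ ((M : ℝ) / 2) by rw [integral_const_mul, s6_gaussVal M]] at h1
  have h3 : (2 * π : ℝ) ^ (-(M : ℝ) / 2) * (rexp (-g y) * (2 * π : ℝ) ^ ((M : ℝ) / 2))
      = rexp (-g y) := by
    rw [mul_comm (rexp _), ← mul_assoc, ← Real.rpow_add (by positivity), neg_div,
      neg_add_cancel, Real.rpow_zero, one_mul]
  rw [← h3]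
  exact h1.const_mul _

end Stmt6Aux

/-- AXDA marginal convergence for the quadratic coupling (Proposition 2.1 with
`φ_α, ψ_β` quadratic and `η² = α² + β²`): the measure `π_η` with density
proportional to `exp(−h−f) (2πη²)^{−M/2} ∫ exp(−g(z)) exp(−‖Dx−z‖²/(2η²)) dz`
converges to `π` (density proportional to `exp(−h−f−g∘D)`) in total variation
as `η → 0⁺`. `f` takes values in `(−∞,∞]`, encoded as an `EReal`-valued function
never equal to `⊥`, with `exp(−f(x))` interpreted as `0` when `f(x) = ⊤`. -/
theorem stmt6 (N M : ℕ) (hN : 1 ≤ N) (hM : 1 ≤ M)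
    (D : EuclideanSpace ℝ (Fin N) →ₗ[ℝ] EuclideanSpace ℝ (Fin M))
    (h : EuclideanSpace ℝ (Fin N) → ℝ) (hh : Measurable h)
    (f : EuclideanSpace ℝ (Fin N) → EReal) (hf : Measurable f)
    (hfbot : ∀ x, f x ≠ ⊥)
    (ef : EuclideanSpace ℝ (Fin N) → ℝ)
    (hef : ∀ x, ef x = Real.exp (-h x) *
      (if f x = ⊤ then 0 else Real.exp (-(f x).toReal)))
    (hint : Integrable ef) (hpos : 0 < ∫ x, ef x)
    (g : EuclideanSpace ℝ (Fin M) → ℝ) (hg : Continuous g)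
    (hgb : ∃ C, ∀ z, Real.exp (-g z) ≤ C)
    (p : EuclideanSpace ℝ (Fin N) → ℝ)
    (hp : ∀ x, p x = ef x * Real.exp (-g (D x)))
    (pe : ℝ → EuclideanSpace ℝ (Fin N) → ℝ)
    (hpe : ∀ η x, pe η x = ef x * ((2 * Real.pi * η ^ 2) ^ (-(M : ℝ) / 2) *
        ∫ z, Real.exp (-g z) * Real.exp (-‖D x - z‖ ^ 2 / (2 * η ^ 2))))
    (π : Measure (EuclideanSpace ℝ (Fin N)))
    (hπ : π = (∫⁻ x, ENNReal.ofReal (p x))⁻¹ •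
        volume.withDensity fun x => ENNReal.ofReal (p x))
    (πe : ℝ → Measure (EuclideanSpace ℝ (Fin N)))
    (hπe : ∀ η, πe η = (∫⁻ x, ENNReal.ofReal (pe η x))⁻¹ •
        volume.withDensity fun x => ENNReal.ofReal (pe η x)) :
    Tendsto (fun η => ⨆ A : {A : Set (EuclideanSpace ℝ (Fin N)) // MeasurableSet A},
        |(π A.1).toReal - (πe η A.1).toReal|)
      (nhdsWithin 0 (Set.Ioi 0)) (nhds 0) := by
  classical
  obtain ⟨C, hC⟩ := hgb
  haveI : Nonempty {A : Set (EuclideanSpace ℝ (Fin N)) // MeasurableSet A} :=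
    ⟨⟨∅, MeasurableSet.empty⟩⟩
  have hD : Continuous D := D.continuous_of_finiteDimensional
  set K : ℝ → EuclideanSpace ℝ (Fin N) → ℝ := fun η x =>
    (2 * Real.pi) ^ (-(M : ℝ) / 2) *
      ∫ u : EuclideanSpace ℝ (Fin M), Real.exp (-g (D x + η • u)) * Real.exp (-‖u‖ ^ 2 / 2) with hK
  have hefnn : ∀ x, 0 ≤ ef x := by
    intro x
    rw [hef]
    refine mul_nonneg (Real.exp_nonneg _) ?_
    split_ifs
    · exact le_rfl
    · exact Real.exp_nonneg _
  have hKnn : ∀ η x, 0 ≤ K η x := fun η x =>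
    mul_nonneg (Real.rpow_nonneg (by positivity) _) (s6_J_nonneg η (D x))
  have hKle : ∀ η x, K η x ≤ C := by
    intro η x
    have h1 := s6_J_le hg hC η (D x)
    have h2 : (0:ℝ) ≤ (2 * Real.pi) ^ (-(M : ℝ) / 2) := Real.rpow_nonneg (by positivity) _
    calc K η x ≤ (2 * Real.pi) ^ (-(M : ℝ) / 2) * (C * (2 * Real.pi) ^ ((M : ℝ) / 2)) :=
          mul_le_mul_of_nonneg_left h1 h2
      _ = C := by
          rw [mul_comm C, ← mul_assoc, ← Real.rpow_add (by positivity), neg_div,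
            neg_add_cancel, Real.rpow_zero, one_mul]
  have hpeK : ∀ {η : ℝ}, 0 < η → ∀ x, pe η x = ef x * K η x := by
    intro η hη x
    rw [hpe]
    simp only [hK]
    rw [← s6_key hg hC hη (D x)]
  have hKcont : ∀ η, Continuous (K η) := fun η =>
    continuous_const.mul ((s6_J_cont hg hC η).comp hD)
  have hp_nn : ∀ x, 0 ≤ p x := fun x => by
    rw [hp]; exact mul_nonneg (hefnn x) (Real.exp_nonneg _)
  have hp_le : ∀ x, p x ≤ C * ef x := fun x => by
    rw [hp, mul_comm C]; exact mul_le_mul_of_nonneg_left (hC _) (hefnn x)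
  have hp_meas : AEStronglyMeasurable p volume := by
    rw [funext hp]
    exact hint.aestronglyMeasurable.mul (Real.continuous_exp.comp (hg.comp hD).neg).aestronglyMeasurable
  have hp_int : Integrable p := by
    refine (hint.const_mul C).mono' hp_meas (Filter.Eventually.of_forall fun x => ?_)
    rw [Real.norm_eq_abs, abs_of_nonneg (hp_nn x)]
    exact hp_le x
  have hpe_meas : ∀ {η : ℝ}, 0 < η → AEStronglyMeasurable (pe η) volume := by
    intro η hη
    rw [funext (hpeK hη)]
    exact hint.aestronglyMeasurable.mul (hKcont η).aestronglyMeasurable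
  have hpe_nn : ∀ {η : ℝ}, 0 < η → ∀ x, 0 ≤ pe η x := by
    intro η hη x
    rw [hpeK hη x]
    exact mul_nonneg (hefnn x) (hKnn η x)
  have hpe_le : ∀ {η : ℝ}, 0 < η → ∀ x, pe η x ≤ C * ef x := by
    intro η hη x
    rw [hpeK hη x, mul_comm C]
    exact mul_le_mul_of_nonneg_left (hKle η x) (hefnn x)
  have hpe_int : ∀ {η : ℝ}, 0 < η → Integrable (pe η) := by
    intro η hη
    refine (hint.const_mul C).mono' (hpe_meas hη) (Filter.Eventually.of_forall fun x => ?_)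
    rw [Real.norm_eq_abs, abs_of_nonneg (hpe_nn hη x)]
    exact hpe_le hη x
  have hptw : ∀ x, Tendsto (fun η => pe η x) (nhdsWithin 0 (Set.Ioi 0)) (nhds (p x)) := by
    intro x
    have h2 := (s6_tendsto hg hC (D x)).const_mul (ef x)
    rw [hp]
    refine Tendsto.congr' ?_ h2
    filter_upwards [self_mem_nhdsWithin] with η hη
    rw [hpe, ← s6_key hg hC hη (D x)]
  have hL : Tendsto (fun η => ∫ x, |pe η x - p x|) (nhdsWithin 0 (Set.Ioi 0)) (nhds 0) := by
    have hres := tendsto_integral_filter_of_dominated_convergence (μ := volume)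
      (l := nhdsWithin (0:ℝ) (Set.Ioi 0)) (F := fun η x => |pe η x - p x|)
      (f := fun _ => (0:ℝ)) (fun x => 2 * C * ef x)
      (by
        filter_upwards [self_mem_nhdsWithin] with η hη
        exact ((hpe_meas hη).sub hp_meas).norm.congr
          (Filter.Eventually.of_forall fun x => Real.norm_eq_abs _))
      (by
        filter_upwards [self_mem_nhdsWithin] with η hη
        refine Filter.Eventually.of_forall fun x => ?_
        rw [Real.norm_eq_abs, abs_abs, abs_le]
        have h1 := hpe_nn hη x
        have h2 := hpe_le hη x
        have h3 := hp_nn x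
        have h4 := hp_le x
        constructor <;> linarith)
      (hint.const_mul (2 * C))
      (by
        refine Filter.Eventually.of_forall fun x => ?_
        have := (hptw x).sub (tendsto_const_nhds (x := p x))
        simpa using this.abs)
    simpa using hres
  have hI : Tendsto (fun η => ∫ x, pe η x) (nhdsWithin 0 (Set.Ioi 0)) (nhds (∫ x, p x)) := by
    apply tendsto_integral_filter_of_dominated_convergence (fun x => C * ef x)
    · filter_upwards [self_mem_nhdsWithin] with η hη
      exact hpe_meas hη
    · filter_upwards [self_mem_nhdsWithin] with η hη
      refine Filter.Eventually.of_forall fun x => ?_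
      rw [Real.norm_eq_abs, abs_of_nonneg (hpe_nn hη x)]
      exact hpe_le hη x
    · exact hint.const_mul C
    · exact Filter.Eventually.of_forall hptw
  have hIpos : 0 < ∫ x, p x := by
    rcases (integral_nonneg (f := p) hp_nn).lt_or_eq with hlt | heq
    · exact hlt
    · exfalso
      have hpz : p =ᵐ[volume] 0 := (integral_eq_zero_iff_of_nonneg hp_nn hp_int).mp heq.symm
      have hefz : ef =ᵐ[volume] 0 := by
        filter_upwards [hpz] with x hx
        have hx' : ef x * Real.exp (-g (D x)) = 0 := by rw [← hp x]; simpa using hx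
        rcases mul_eq_zero.mp hx' with h' | h'
        · simpa using h'
        · exact absurd h' (Real.exp_ne_zero _)
      rw [integral_congr_ae hefz] at hpos
      simp at hpos
  have hIηev : ∀ᶠ η in nhdsWithin 0 (Set.Ioi 0), (∫ x, p x) / 2 < ∫ x, pe η x :=
    hI.eventually_const_lt (half_lt_self hIpos)
  have hmeasA : ∀ (q : EuclideanSpace ℝ (Fin N) → ℝ), Integrable q → (∀ x, 0 ≤ q x) →
      ∀ (A : Set (EuclideanSpace ℝ (Fin N))), MeasurableSet A →
      (((∫⁻ x, ENNReal.ofReal (q x))⁻¹ •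
        volume.withDensity fun x => ENNReal.ofReal (q x)) A).toReal
        = (∫ x in A, q x) / ∫ x, q x := by
    intro q hqi hqn A hA
    rw [Measure.smul_apply, smul_eq_mul, withDensity_apply _ hA,
      ← ofReal_integral_eq_lintegral_ofReal hqi (Filter.Eventually.of_forall hqn),
      ← ofReal_integral_eq_lintegral_ofReal hqi.integrableOn
        (ae_restrict_of_ae (Filter.Eventually.of_forall hqn)),
      ENNReal.toReal_mul, ENNReal.toReal_inv, ENNReal.toReal_ofReal (integral_nonneg hqn),
      ENNReal.toReal_ofReal (setIntegral_nonneg hA fun x _ => hqn x), ← div_eq_inv_mul]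
  have hev : ∀ᶠ η in nhdsWithin 0 (Set.Ioi 0),
      0 ≤ (⨆ A : {A : Set (EuclideanSpace ℝ (Fin N)) // MeasurableSet A},
          |(π A.1).toReal - (πe η A.1).toReal|) ∧
      (⨆ A : {A : Set (EuclideanSpace ℝ (Fin N)) // MeasurableSet A},
          |(π A.1).toReal - (πe η A.1).toReal|) ≤ 2 / (∫ x, p x) * ∫ x, |pe η x - p x| := by
    filter_upwards [self_mem_nhdsWithin, hIηev] with η hη hIη
    have hη' : (0:ℝ) < η := hη
    have hIηpos : 0 < ∫ x, pe η x := lt_trans (by positivity) hIη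
    have hLnn : 0 ≤ ∫ x, |pe η x - p x| := integral_nonneg fun x => abs_nonneg _
    have hIabs : |(∫ x, pe η x) - ∫ x, p x| ≤ ∫ x, |pe η x - p x| := by
      rw [← integral_sub (hpe_int hη') hp_int]
      simpa [Real.norm_eq_abs] using
        norm_integral_le_integral_norm (μ := volume) (fun x => pe η x - p x)
    have hub : ∀ A : {A : Set (EuclideanSpace ℝ (Fin N)) // MeasurableSet A},
        |(π A.1).toReal - (πe η A.1).toReal| ≤ 2 / (∫ x, p x) * ∫ x, |pe η x - p x| := by
      rintro ⟨A, hA⟩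
      have hπA : (π A).toReal = (∫ x in A, p x) / ∫ x, p x := by
        rw [hπ]; exact hmeasA p hp_int hp_nn A hA
      have hπeA : (πe η A).toReal = (∫ x in A, pe η x) / ∫ x, pe η x := by
        rw [hπe]; exact hmeasA (pe η) (hpe_int hη') (hpe_nn hη') A hA
      have hbnn : 0 ≤ ∫ x in A, pe η x := setIntegral_nonneg hA fun x _ => hpe_nn hη' x
      have hbIη : (∫ x in A, pe η x) ≤ ∫ x, pe η x :=
        setIntegral_le_integral (hpe_int hη') (Filter.Eventually.of_forall (hpe_nn hη'))
      have habL : |(∫ x in A, p x) - ∫ x in A, pe η x| ≤ ∫ x, |pe η x - p x| := by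
        rw [← integral_sub hp_int.integrableOn (hpe_int hη').integrableOn]
        calc |∫ x in A, (p x - pe η x)| ≤ ∫ x in A, |p x - pe η x| := by
              simpa [Real.norm_eq_abs] using
                norm_integral_le_integral_norm (μ := volume.restrict A)
                  (fun x => p x - pe η x)
          _ = ∫ x in A, |pe η x - p x| := by simp_rw [abs_sub_comm]
          _ ≤ ∫ x, |pe η x - p x| :=
              setIntegral_le_integral ((hpe_int hη').sub hp_int).abs
                (Filter.Eventually.of_forall fun x => abs_nonneg _)
      have e1 : (∫ x in A, p x) / (∫ x, p x) - (∫ x in A, pe η x) / (∫ x, pe η x)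
          = ((∫ x in A, p x) - ∫ x in A, pe η x) / (∫ x, p x)
            + (∫ x in A, pe η x) / (∫ x, pe η x) *
              (((∫ x, pe η x) - ∫ x, p x) / (∫ x, p x)) := by
        field_simp
        ring
      rw [hπA, hπeA, e1]
      calc |((∫ x in A, p x) - ∫ x in A, pe η x) / (∫ x, p x)
            + (∫ x in A, pe η x) / (∫ x, pe η x) *
              (((∫ x, pe η x) - ∫ x, p x) / (∫ x, p x))|
          ≤ |((∫ x in A, p x) - ∫ x in A, pe η x) / (∫ x, p x)|
            + |(∫ x in A, pe η x) / (∫ x, pe η x) *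
              (((∫ x, pe η x) - ∫ x, p x) / (∫ x, p x))| := abs_add_le _ _
        _ ≤ (∫ x, |pe η x - p x|) / (∫ x, p x)
            + 1 * ((∫ x, |pe η x - p x|) / (∫ x, p x)) := by
            refine add_le_add ?_ ?_
            · rw [abs_div, abs_of_pos hIpos]
              gcongr
            · rw [abs_mul, abs_div, abs_div, abs_of_pos hIηpos, abs_of_pos hIpos,
                abs_of_nonneg hbnn]
              refine mul_le_mul ?_ ?_ (by positivity) zero_le_one
              · exact (div_le_one hIηpos).mpr hbIη
              · gcongr
        _ = 2 / (∫ x, p x) * ∫ x, |pe η x - p x| := by ring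
    constructor
    · refine le_ciSup_of_le ⟨2 / (∫ x, p x) * ∫ x, |pe η x - p x|, ?_⟩
        ⟨∅, MeasurableSet.empty⟩ (abs_nonneg _)
      rintro r ⟨A, rfl⟩
      exact hub A
    · exact ciSup_le hub
  refine squeeze_zero' (hev.mono fun η hx => hx.1) (hev.mono fun η hx => hx.2) ?_
  have := hL.const_mul (2 / ∫ x, p x)
  simpa using this
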